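/- Let Ω be a bounded open convex subset of ℝⁿ and let d denote its Hilbert distance. Then d is a metric on Ω: for all x, y, z ∈ Ω one has d(x,y) ≥ 0, d(x,y) = 0 if and only if x = y, d(x,y) = d(y,x), and d(x,y) ≤ d(x,z) + d(z,y). -/

import Mathlib

/-- The predicate that `d` is the Hilbert distance of the bounded open convex set `Ω`:
`d x x = 0`, and for distinct `x y ∈ Ω` there are frontier points `x̄` (with `x`
strictly between `x̄` and `y`) and `ȳ` (with `y` strictly between `x` and `ȳ`) such that
`d x y = log ((‖ȳ - x‖/‖ȳ - y‖) * (‖x̄ - y‖/‖x̄ - x‖))`. -/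
def IsHilbertDist {n : ℕ} (Ω : Set (EuclideanSpace ℝ (Fin n)))
    (d : EuclideanSpace ℝ (Fin n) → EuclideanSpace ℝ (Fin n) → ℝ) : Prop :=
  (∀ x, d x x = 0) ∧
  ∀ x ∈ Ω, ∀ y ∈ Ω, x ≠ y →
    ∃ xb ∈ frontier Ω, ∃ yb ∈ frontier Ω,
      x ∈ openSegment ℝ xb y ∧ y ∈ openSegment ℝ x yb ∧
      d x y = Real.log ((‖yb - x‖ / ‖yb - y‖) * (‖xb - y‖ / ‖xb - x‖))

/-- The `(n+1) × (n+1)` block matrix `[[A, b], [cᵀ, δ]]`. -/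
noncomputable def projMat {n : ℕ} (A : Matrix (Fin n) (Fin n) ℝ)
    (b c : EuclideanSpace ℝ (Fin n)) (δ : ℝ) :
    Matrix (Fin n ⊕ Fin 1) (Fin n ⊕ Fin 1) ℝ :=
  Matrix.fromBlocks A (Matrix.replicateCol (Fin 1) (WithLp.equiv 2 (Fin n → ℝ) b))
    (Matrix.replicateRow (Fin 1) (WithLp.equiv 2 (Fin n → ℝ) c)) (Matrix.of fun _ _ => δ)

/-- The fractional linear map `x ↦ (A·x + b) / (⟨c,x⟩ + δ)`. -/
noncomputable def fracLin {n : ℕ} (A : Matrix (Fin n) (Fin n) ℝ)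
    (b c : EuclideanSpace ℝ (Fin n)) (δ : ℝ)
    (x : EuclideanSpace ℝ (Fin n)) : EuclideanSpace ℝ (Fin n) :=
  ((∑ i, c i * x i) + δ)⁻¹ • ((WithLp.equiv 2 (Fin n → ℝ)).symm (A.mulVec x) + b)

/-- `f` is the restriction to `U` of a projective transformation of `ℝPⁿ`:
it has fractional linear form `x ↦ (A·x + b)/(⟨c,x⟩ + δ)` on `U`, with the block matrix
`[[A, b],[cᵀ, δ]]` invertible and the denominator nonvanishing on `U`. -/
def IsProjectiveRestriction {n : ℕ} (U : Set (EuclideanSpace ℝ (Fin n)))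
    (f : EuclideanSpace ℝ (Fin n) → EuclideanSpace ℝ (Fin n)) : Prop :=
  ∃ (A : Matrix (Fin n) (Fin n) ℝ) (b c : EuclideanSpace ℝ (Fin n)) (δ : ℝ),
    (projMat A b c δ).det ≠ 0 ∧
    ∀ x ∈ U, ((∑ i, c i * x i) + δ ≠ 0) ∧ f x = fracLin A b c δ x


open Real

namespace HilbertAux

variable {n : ℕ}

lemma seg_facts {p q qb : EuclideanSpace ℝ (Fin n)} (h : q ∈ openSegment ℝ p qb)
    (hpq : p ≠ q) :
    ∃ a : ℝ, 0 < a ∧ a < 1 ∧ q = a • p + (1 - a) • qb ∧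
      qb - q = a • (qb - p) ∧ q - p = (1 - a) • (qb - p) ∧
      qb ≠ p ∧ qb ≠ q ∧ ‖qb - p‖ / ‖qb - q‖ = 1 / a := by
  obtain ⟨a, b, ha, hb, hab, hq⟩ := h
  have hb1 : b = 1 - a := by linarith
  subst hb1
  have ha1 : a < 1 := by linarith
  have hqbp : qb ≠ p := by
    rintro rfl
    exact hpq (by rw [← hq, Convex.combo_self hab])
  have h1 : qb - q = a • (qb - p) := by rw [← hq]; module
  have h2 : q - p = (1 - a) • (qb - p) := by rw [← hq]; module
  have hqbq : qb ≠ q := by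
    intro hEq
    have : a • (qb - p) = 0 := by rw [← h1, hEq, sub_self]
    rcases smul_eq_zero.mp this with h | h
    · exact ha.ne' h
    · exact hqbp (sub_eq_zero.mp h)
  have hnorm : ‖qb - q‖ = a * ‖qb - p‖ := by
    rw [h1, norm_smul, Real.norm_eq_abs, abs_of_pos ha]
  have hnp : ‖qb - p‖ ≠ 0 := norm_ne_zero_iff.mpr (sub_ne_zero.mpr hqbp)
  refine ⟨a, ha, ha1, hq.symm, h1, h2, hqbp, hqbq, ?_⟩
  rw [hnorm]
  field_simp

lemma ratio_gt_one {p q qb : EuclideanSpace ℝ (Fin n)} (h : q ∈ openSegment ℝ p qb)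
    (hpq : p ≠ q) : 1 < ‖qb - p‖ / ‖qb - q‖ := by
  obtain ⟨a, ha, ha1, _, _, _, _, _, hr⟩ := seg_facts h hpq
  rw [hr, lt_div_iff₀ ha, one_mul]
  exact ha1

lemma funk_le {p q qb : EuclideanSpace ℝ (Fin n)} (h : q ∈ openSegment ℝ p qb)
    (hpq : p ≠ q) (f : EuclideanSpace ℝ (Fin n) →L[ℝ] ℝ) (c : ℝ)
    (hfp : f p < c) (hqb : f qb ≤ c) :
    0 < c - f q ∧ (c - f p) / (c - f q) ≤ ‖qb - p‖ / ‖qb - q‖ := by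
  obtain ⟨a, ha, ha1, hq, _, _, _, _, hr⟩ := seg_facts h hpq
  have hfq : f q = a * f p + (1 - a) * f qb := by
    rw [hq]; simp [map_add, map_smul]
  have h1 : c - f q = a * (c - f p) + (1 - a) * (c - f qb) := by rw [hfq]; ring
  have hpos : 0 < c - f q := by nlinarith
  refine ⟨hpos, ?_⟩
  rw [hr, div_le_div_iff₀ hpos ha]
  nlinarith

lemma funk_eq {p q qb : EuclideanSpace ℝ (Fin n)} (h : q ∈ openSegment ℝ p qb)
    (hpq : p ≠ q) (f : EuclideanSpace ℝ (Fin n) →L[ℝ] ℝ)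
    (hfp : f p < f qb) :
    ‖qb - p‖ / ‖qb - q‖ = (f qb - f p) / (f qb - f q) := by
  obtain ⟨a, ha, ha1, hq, _, _, _, _, hr⟩ := seg_facts h hpq
  have hfq : f q = a * f p + (1 - a) * f qb := by
    rw [hq]; simp [map_add, map_smul]
  have h2 : f qb - f q = a * (f qb - f p) := by rw [hfq]; ring
  rw [hr, h2]
  have hne : f qb - f p ≠ 0 := by linarith
  field_simp

lemma frontier_unique {Ω : Set (EuclideanSpace ℝ (Fin n))} (hO : IsOpen Ω)
    (hC : Convex ℝ Ω) {x y b1 b2 : EuclideanSpace ℝ (Fin n)} (hx : x ∈ Ω)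
    (hxy : x ≠ y) (hb1 : b1 ∈ frontier Ω) (hb2 : b2 ∈ frontier Ω)
    (h1 : y ∈ openSegment ℝ x b1) (h2 : y ∈ openSegment ℝ x b2) : b1 = b2 := by
  obtain ⟨a1, _, ha1', _, _, hv1, _, _, _⟩ := seg_facts h1 hxy
  obtain ⟨a2, _, ha2', _, _, hv2, _, _, _⟩ := seg_facts h2 hxy
  have key : ∀ c1 c2 : EuclideanSpace ℝ (Fin n), c1 ∈ frontier Ω → c2 ∈ frontier Ω →
      ∀ v1 v2 : ℝ, 0 < v1 → 0 < v2 → v2 ≤ v1 →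
      v1 • (c1 - x) = v2 • (c2 - x) → c1 = c2 := by
    intro c1 c2 hc1 hc2 v1 v2 hv1p hv2p hle heq
    have hr : c1 - x = (v2 / v1) • (c2 - x) := by
      have := congrArg (fun w => (v1⁻¹ : ℝ) • w) heq
      simpa [smul_smul, inv_mul_cancel₀ hv1p.ne', div_eq_inv_mul, mul_comm] using this
    rcases eq_or_lt_of_le hle with hEq | hlt
    · subst hEq
      have : c1 - x = c2 - x := by
        rw [hr, div_self hv2p.ne', one_smul]
      exact sub_left_injective this
    · have hr1 : v2 / v1 < 1 := (div_lt_one hv1p).2 hlt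
      have hr0 : 0 < v2 / v1 := div_pos hv2p hv1p
      have hc1x : c1 = x + (v2 / v1) • (c2 - x) := by
        rw [← hr]; abel
      have hmem : c1 ∈ openSegment ℝ x c2 :=
        ⟨1 - v2 / v1, v2 / v1, by linarith, hr0, by ring, by rw [hc1x]; module⟩
      have hint : c1 ∈ interior Ω :=
        hC.openSegment_interior_closure_subset_interior
          (by rwa [hO.interior_eq]) (frontier_subset_closure hc2) hmem
      exact absurd hint hc1.2
  rcases le_total (1 - a2) (1 - a1) with hle | hle
  · exact key b1 b2 hb1 hb2 (1 - a1) (1 - a2) (by linarith) (by linarith) hle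
      (by rw [← hv1, ← hv2])
  · exact (key b2 b1 hb2 hb1 (1 - a2) (1 - a1) (by linarith) (by linarith) hle
      (by rw [← hv1, ← hv2])).symm

end HilbertAux

set_option maxHeartbeats 1000000 in
open HilbertAux in
/-- the Hilbert distance is a metric on `Ω`. -/
theorem hilbert_dist_is_metric {n : ℕ} (Ω : Set (EuclideanSpace ℝ (Fin n)))
    (hne : Ω.Nonempty) (hO : IsOpen Ω) (hB : Bornology.IsBounded Ω) (hC : Convex ℝ Ω)
    (d : EuclideanSpace ℝ (Fin n) → EuclideanSpace ℝ (Fin n) → ℝ)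
    (hd : IsHilbertDist Ω d) :
    ∀ x ∈ Ω, ∀ y ∈ Ω, ∀ z ∈ Ω,
      0 ≤ d x y ∧ (d x y = 0 ↔ x = y) ∧ d x y = d y x ∧ d x y ≤ d x z + d z y := by
  obtain ⟨hd0, hdW⟩ := hd
  have notin : ∀ b ∈ frontier Ω, b ∉ Ω := by
    intro b hb
    rw [hO.frontier_eq] at hb; exact hb.2
  have hfr : ∀ (f : EuclideanSpace ℝ (Fin n) →L[ℝ] ℝ) (c : ℝ),
      (∀ a ∈ Ω, f a < c) → ∀ b ∈ frontier Ω, f b ≤ c := by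
    intro f c hf b hb
    exact closure_minimal (fun a ha => (hf a ha).le)
      (isClosed_le f.continuous continuous_const) (frontier_subset_closure hb)
  have pos : ∀ x ∈ Ω, ∀ y ∈ Ω, x ≠ y → 0 < d x y := by
    intro x hx y hy hxy
    obtain ⟨xb, hxb, yb, hyb, h1, h2, e⟩ := hdW x hx y hy hxy
    rw [openSegment_symm] at h1
    have r1 : 1 < ‖yb - x‖ / ‖yb - y‖ := ratio_gt_one h2 hxy
    have r2 : 1 < ‖xb - y‖ / ‖xb - x‖ := ratio_gt_one h1 (Ne.symm hxy)
    rw [e]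
    exact Real.log_pos (by nlinarith)
  have nonneg : ∀ x ∈ Ω, ∀ y ∈ Ω, 0 ≤ d x y := by
    intro a ha b hb
    rcases eq_or_ne a b with rfl | hab
    · rw [hd0]
    · exact (pos a ha b hb hab).le
  have symm : ∀ x ∈ Ω, ∀ y ∈ Ω, d x y = d y x := by
    intro a ha b hb
    rcases eq_or_ne a b with rfl | hab
    · rfl
    obtain ⟨ab, hab1, bb, hbb1, h1, h2, e1⟩ := hdW a ha b hb hab
    obtain ⟨ab', hab1', bb', hbb1', h1', h2', e2⟩ := hdW b hb a ha (Ne.symm hab)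
    rw [openSegment_symm] at h1 h1'
    have e3 : ab' = bb := frontier_unique hO hC ha hab hab1' hbb1 h1' h2
    have e4 : bb' = ab := frontier_unique hO hC hb (Ne.symm hab) hbb1' hab1 h2' h1
    rw [e1, e2, e3, e4]
    congr 1
    ring
  have tri : ∀ x ∈ Ω, ∀ y ∈ Ω, ∀ z ∈ Ω, d x y ≤ d x z + d z y := by
    intro x hx y hy z hz
    rcases eq_or_ne x z with rfl | hxz
    · rw [hd0]; linarith [nonneg x hx y hy]
    rcases eq_or_ne z y with rfl | hzy
    · rw [hd0]; linarith [nonneg x hx z hz]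
    rcases eq_or_ne x y with rfl | hxy
    · rw [hd0]
      have h1 := nonneg x hx z hz
      have h2 := nonneg z hz x hx
      linarith
    obtain ⟨xb1, hxb1, yb1, hyb1, hs1, hs2, e1⟩ := hdW x hx y hy hxy
    obtain ⟨xb2, hxb2, zb2, hzb2, hs3, hs4, e2⟩ := hdW x hx z hz hxz
    obtain ⟨zb3, hzb3, yb3, hyb3, hs5, hs6, e3⟩ := hdW z hz y hy hzy
    rw [openSegment_symm] at hs1 hs3 hs5
    obtain ⟨f1, hf1⟩ := geometric_hahn_banach_open_point hC hO (notin _ hyb1)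
    obtain ⟨f2, hf2⟩ := geometric_hahn_banach_open_point hC hO (notin _ hxb1)
    set c1 := f1 yb1 with hc1
    set c2 := f2 xb1 with hc2
    have R1eq : ‖yb1 - x‖ / ‖yb1 - y‖ = (c1 - f1 x) / (c1 - f1 y) :=
      funk_eq hs2 hxy f1 (hf1 x hx)
    have R2eq : ‖xb1 - y‖ / ‖xb1 - x‖ = (c2 - f2 y) / (c2 - f2 x) :=
      funk_eq hs1 (Ne.symm hxy) f2 (hf2 y hy)
    have hA1 := funk_le hs4 hxz f1 c1 (hf1 x hx) (hfr f1 c1 hf1 zb2 hzb2)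
    have hA2 := funk_le hs6 hzy f1 c1 (hf1 z hz) (hfr f1 c1 hf1 yb3 hyb3)
    have hB1 := funk_le hs5 (Ne.symm hzy) f2 c2 (hf2 y hy) (hfr f2 c2 hf2 zb3 hzb3)
    have hB2 := funk_le hs3 (Ne.symm hxz) f2 c2 (hf2 z hz) (hfr f2 c2 hf2 xb2 hxb2)
    have hcx1 : 0 < c1 - f1 x := sub_pos.2 (hf1 x hx)
    have hcy2 : 0 < c2 - f2 y := sub_pos.2 (hf2 y hy)
    have hcz1 := hA1.1
    have hcy1 := hA2.1
    have hcz2 := hB1.1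
    have hcx2 := hB2.1
    have split1 : (c1 - f1 x) / (c1 - f1 y)
        = ((c1 - f1 x) / (c1 - f1 z)) * ((c1 - f1 z) / (c1 - f1 y)) := by
      field_simp
    have split2 : (c2 - f2 y) / (c2 - f2 x)
        = ((c2 - f2 y) / (c2 - f2 z)) * ((c2 - f2 z) / (c2 - f2 x)) := by
      field_simp
    have key1 : ‖yb1 - x‖ / ‖yb1 - y‖
        ≤ (‖zb2 - x‖ / ‖zb2 - z‖) * (‖yb3 - z‖ / ‖yb3 - y‖) := by
      rw [R1eq, split1]
      exact mul_le_mul hA1.2 hA2.2 (div_nonneg hcz1.le hcy1.le)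
        (div_nonneg (norm_nonneg _) (norm_nonneg _))
    have key2 : ‖xb1 - y‖ / ‖xb1 - x‖
        ≤ (‖zb3 - y‖ / ‖zb3 - z‖) * (‖xb2 - z‖ / ‖xb2 - x‖) := by
      rw [R2eq, split2]
      exact mul_le_mul hB1.2 hB2.2 (div_nonneg hcz2.le hcx2.le)
        (div_nonneg (norm_nonneg _) (norm_nonneg _))
    have r1 : 1 < ‖yb1 - x‖ / ‖yb1 - y‖ := ratio_gt_one hs2 hxy
    have r2 : 1 < ‖xb1 - y‖ / ‖xb1 - x‖ := ratio_gt_one hs1 (Ne.symm hxy)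
    have r3 : 1 < ‖zb2 - x‖ / ‖zb2 - z‖ := ratio_gt_one hs4 hxz
    have r4 : 1 < ‖xb2 - z‖ / ‖xb2 - x‖ := ratio_gt_one hs3 (Ne.symm hxz)
    have r5 : 1 < ‖yb3 - z‖ / ‖yb3 - y‖ := ratio_gt_one hs6 hzy
    have r6 : 1 < ‖zb3 - y‖ / ‖zb3 - z‖ := ratio_gt_one hs5 (Ne.symm hzy)
    have p1 : (0:ℝ) < ‖zb2 - x‖ / ‖zb2 - z‖ * (‖xb2 - z‖ / ‖xb2 - x‖) := by nlinarith
    have p2 : (0:ℝ) < ‖yb3 - z‖ / ‖yb3 - y‖ * (‖zb3 - y‖ / ‖zb3 - z‖) := by nlinarith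
    have p0 : (0:ℝ) < ‖yb1 - x‖ / ‖yb1 - y‖ * (‖xb1 - y‖ / ‖xb1 - x‖) := by nlinarith
    rw [e1, e2, e3, ← Real.log_mul p1.ne' p2.ne']
    apply Real.log_le_log p0
    calc (‖yb1 - x‖ / ‖yb1 - y‖) * (‖xb1 - y‖ / ‖xb1 - x‖)
        ≤ ((‖zb2 - x‖ / ‖zb2 - z‖) * (‖yb3 - z‖ / ‖yb3 - y‖)) *
          ((‖zb3 - y‖ / ‖zb3 - z‖) * (‖xb2 - z‖ / ‖xb2 - x‖)) :=
          mul_le_mul key1 key2 (by nlinarith) (by nlinarith)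
      _ = (‖zb2 - x‖ / ‖zb2 - z‖ * (‖xb2 - z‖ / ‖xb2 - x‖)) *
          (‖yb3 - z‖ / ‖yb3 - y‖ * (‖zb3 - y‖ / ‖zb3 - z‖)) := by ring
  intro x hx y hy z hz
  refine ⟨nonneg x hx y hy, ⟨?_, fun h => h ▸ hd0 x⟩, symm x hx y hy, tri x hx y hy z hz⟩
  intro h
  by_contra hxy
  exact absurd h (pos x hx y hy hxy).ne'
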